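/- Under the h-exponential change, the second fundamental v-tensors of the hypersurfaces are related by *M_{αβ} = √ν · e^τ · M_{αβ}, where M_{αβ} = C_{ijk}B^i_α B^j_β N^k and *M_{αβ} = *C_{ijk}B^i_α B^j_β *N^k, assuming b_jN^j = 0. -/

import Mathlib

/-- Under the h-exponential change, the second fundamental v-tensors of the
hypersurfaces satisfy `*M_{αβ} = √ν e^τ M_{αβ}`, where `M_{αβ} = C_{ijk}B^i_αB^j_βN^k`,
`*M_{αβ} = *C_{ijk}B^i_αB^j_β *N^k`, and `b_jN^j = 0`. -/
theorem stmt_14 {n p : ℕ}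
    (C sC : Fin n → Fin n → Fin n → ℝ)
    (h : Fin n → Fin n → ℝ)
    (m l b N sN : Fin n → ℝ)
    (B : Fin n → Fin p → ℝ)
    (L τ ρ ν : ℝ) (hν : ν = 1 + ρ - τ) (hνpos : 0 < ν) (hL0 : L ≠ 0)
    (hsC : ∀ i j k, sC i j k
        = ν * Real.exp (2*τ) * C i j k
          + (2 / L) * Real.exp (2*τ) * m i * m j * m k
          + (1 / (2 * L)) * Real.exp (2*τ) * (2*ν - 1)
            * (m i * h k j + m j * h k i + m k * h i j))
    (hsN : ∀ k, sN k = N k / (Real.exp τ * Real.sqrt ν))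
    (hm : ∀ i, m i = b i - τ * l i)
    (htang : ∑ j, b j * N j = 0)
    (hlN : ∑ j, l j * N j = 0)
    (hhBN : ∀ α, ∑ k, ∑ j, h k j * B j α * N k = 0)
    (hhBN' : ∀ α, ∑ k, ∑ j, h j k * B j α * N k = 0) :
    ∀ α β, ∑ i, ∑ j, ∑ k, sC i j k * B i α * B j β * sN k
      = Real.sqrt ν * Real.exp τ * ∑ i, ∑ j, ∑ k, C i j k * B i α * B j β * N k := by
  intro α β
  -- m_k N^k = 0
  have hmN : ∑ j, m j * N j = 0 := by
    have e : ∀ j, m j * N j = b j * N j - τ * (l j * N j) := fun j => by rw [hm]; ring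
    simp only [e, Finset.sum_sub_distrib, ← Finset.mul_sum, htang, hlN, mul_zero, sub_zero]
  -- vanishing cross terms
  have z1 : ∑ i, ∑ j, ∑ k, (m i * B i α) * ((m j * B j β) * (m k * N k)) = 0 := by
    simp only [← Finset.mul_sum, hmN, mul_zero, Finset.sum_const_zero]
  have hswapβ : ∑ j, ∑ k, h k j * B j β * N k = 0 := by
    rw [Finset.sum_comm]; exact hhBN β
  have z2 : ∑ i, ∑ j, ∑ k, (m i * B i α) * (h k j * B j β * N k) = 0 := by
    simp only [← Finset.mul_sum, hswapβ, mul_zero, Finset.sum_const_zero]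
  have hswapα : ∑ i, ∑ k, h k i * B i α * N k = 0 := by
    rw [Finset.sum_comm]; exact hhBN α
  have z3 : ∑ i, ∑ j, ∑ k, (m j * B j β) * (h k i * B i α * N k) = 0 := by
    rw [Finset.sum_comm]
    simp only [← Finset.mul_sum, hswapα, mul_zero, Finset.sum_const_zero]
  have z4 : ∑ i, ∑ j, ∑ k, (m k * N k) * (h i j * B i α * B j β) = 0 := by
    simp only [← Finset.sum_mul, hmN, zero_mul, Finset.sum_const_zero]
  -- key computation with N instead of sN
  have split : ∀ i j k, sC i j k * B i α * B j β * N k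
      = ν * Real.exp (2*τ) * (C i j k * B i α * B j β * N k)
        + (2 / L) * Real.exp (2*τ) * ((m i * B i α) * ((m j * B j β) * (m k * N k)))
        + (1 / (2 * L)) * Real.exp (2*τ) * (2*ν - 1)
            * ((m i * B i α) * (h k j * B j β * N k))
        + (1 / (2 * L)) * Real.exp (2*τ) * (2*ν - 1)
            * ((m j * B j β) * (h k i * B i α * N k))
        + (1 / (2 * L)) * Real.exp (2*τ) * (2*ν - 1)
            * ((m k * N k) * (h i j * B i α * B j β)) := by
    intro i j k; rw [hsC]; ring
  have key : ∑ i, ∑ j, ∑ k, sC i j k * B i α * B j β * N k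
      = ν * Real.exp (2*τ) * ∑ i, ∑ j, ∑ k, C i j k * B i α * B j β * N k := by
    simp only [split, Finset.sum_add_distrib, ← Finset.mul_sum, ← Finset.sum_mul, hmN,
      hswapα, hswapβ, mul_zero, zero_mul, Finset.sum_const_zero, add_zero]
  -- relate sN to N
  have hstep : ∀ i j k : Fin n, sC i j k * B i α * B j β * sN k
      = (sC i j k * B i α * B j β * N k) * (Real.exp τ * Real.sqrt ν)⁻¹ := by
    intro i j k; rw [hsN]; ring
  calc ∑ i, ∑ j, ∑ k, sC i j k * B i α * B j β * sN k
      = (∑ i, ∑ j, ∑ k, sC i j k * B i α * B j β * N k) * (Real.exp τ * Real.sqrt ν)⁻¹ := by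
        simp only [hstep, ← Finset.sum_mul]
    _ = Real.sqrt ν * Real.exp τ * ∑ i, ∑ j, ∑ k, C i j k * B i α * B j β * N k := by
        rw [key]
        have hνs : Real.sqrt ν * Real.sqrt ν = ν := Real.mul_self_sqrt hνpos.le
        have he : Real.exp (2*τ) = Real.exp τ * Real.exp τ := by
          rw [two_mul, Real.exp_add]
        have hs0 : Real.sqrt ν ≠ 0 := ne_of_gt (Real.sqrt_pos.mpr hνpos)
        rw [he]
        field_simp
        linear_combination (
          ∑ i, ∑ j, ∑ k, C i j k * B i α * B j β * N k) * hνs.symm
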